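/- Let h(x) = x(log x − 1) + 1 for x > 0. Then for every x ∈ (0, 2), h(x) ≥ (1/3)(x − 1)². -/

import Mathlib

private lemma F_hasDerivAt (y : ℝ) (hy : 0 < y) :
    HasDerivAt (fun t : ℝ => t * (Real.log t - 1) + 1 - (1 / 3) * (t - 1) ^ 2)
      (Real.log y - (2 / 3) * (y - 1)) y := by
  have hlog : HasDerivAt Real.log y⁻¹ y := Real.hasDerivAt_log hy.ne'
  have h1 : HasDerivAt (fun t : ℝ => t * (Real.log t - 1))
      (1 * (Real.log y - 1) + y * y⁻¹) y :=
    (hasDerivAt_id y).mul (hlog.sub_const 1)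
  have h2 : HasDerivAt (fun t : ℝ => (1 / 3 : ℝ) * (t - 1) ^ 2)
      ((1 / 3) * (2 * (y - 1) ^ 1 * 1)) y :=
    (((hasDerivAt_id y).sub_const 1).pow 2).const_mul (1 / 3)
  have := (h1.add_const 1).sub h2
  have e : Real.log y - (2 / 3) * (y - 1) =
      1 * (Real.log y - 1) + y * y⁻¹ - (1 / 3) * (2 * (y - 1) ^ 1 * 1) := by
    rw [mul_inv_cancel₀ hy.ne']; ring
  rw [e]; exact this

private lemma F_cont {s : Set ℝ} (hs : ∀ t ∈ s, t ≠ 0) :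
    ContinuousOn (fun t : ℝ => t * (Real.log t - 1) + 1 - (1 / 3) * (t - 1) ^ 2) s := by
  have hlog : ContinuousOn Real.log s := Real.continuousOn_log.mono (fun t ht => hs t ht)
  exact ((continuousOn_id.mul (hlog.sub continuousOn_const)).add continuousOn_const).sub
    ((continuousOn_const.mul ((continuousOn_id.sub continuousOn_const).pow 2)))

/-- On `[1,2]`, `log t ≥ (2/3)(t-1)`. -/
private lemma log_ge (t : ℝ) (h1 : 1 ≤ t) (h2 : t ≤ 2) :
    (2 / 3) * (t - 1) ≤ Real.log t := by
  have ht0 : 0 < t := by linarith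
  rcases le_or_gt t (3 / 2) with hc | hc
  · have := Real.one_sub_inv_le_log_of_pos ht0
    have hinv : t⁻¹ = 1 / t := by rw [one_div]
    have : 1 - 1 / t ≤ Real.log t := by rw [← hinv]; exact this
    have hit : 1 / t * t = 1 := by field_simp
    have h9 : 0 ≤ (3 - 2 * t) * (t - 1) := by nlinarith
    nlinarith [hit, h9, ht0]
  · -- use log t = log 2 + log (t/2) ≥ log 2 + 1 - 2/t
    have hu : (0 : ℝ) < t / 2 := by linarith
    have h4 : 1 - (t / 2)⁻¹ ≤ Real.log (t / 2) := Real.one_sub_inv_le_log_of_pos hu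
    have h5 : Real.log (t / 2) = Real.log t - Real.log 2 :=
      Real.log_div ht0.ne' two_ne_zero
    have h6 : (0.6931471803 : ℝ) < Real.log 2 := Real.log_two_gt_d9
    have h7 : (t / 2)⁻¹ = 2 / t := by field_simp
    rw [h5, h7] at h4
    -- need: (2/3)(t-1) ≤ log 2 + 1 - 2/t
    have h8 : (2 / 3) * (t - 1) ≤ Real.log 2 + 1 - 2 / t := by
      have hit2 : 2 / t * t = 2 := by field_simp
      have h9 : 0 ≤ (t - 3 / 2) * (2 - t) := by nlinarith
      nlinarith [hit2, h9, h6, hc, ht0]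
    linarith

theorem h_ge_third_sq (x : ℝ) (hx₀ : 0 < x) (hx₂ : x < 2) :
    x * (Real.log x - 1) + 1 ≥ (1 / 3) * (x - 1) ^ 2 := by
  set F : ℝ → ℝ := fun t => t * (Real.log t - 1) + 1 - (1 / 3) * (t - 1) ^ 2 with hF
  have hF1 : F 1 = 0 := by simp [hF]
  have key : 0 ≤ F x := by
    rcases le_total x 1 with hx1 | hx1
    · -- F antitone on [x, 1]
      have hpos : ∀ t ∈ Set.Icc x 1, t ≠ 0 := fun t ht => (lt_of_lt_of_le hx₀ ht.1).ne'
      have hderiv : ∀ t ∈ interior (Set.Icc x 1), HasDerivAt F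
          (Real.log t - (2 / 3) * (t - 1)) t := by
        rw [interior_Icc]
        intro t ht
        exact F_hasDerivAt t (lt_trans hx₀ ht.1)
      have hanti : AntitoneOn F (Set.Icc x 1) := by
        apply antitoneOn_of_deriv_nonpos (convex_Icc x 1) (F_cont hpos)
        · intro t ht
          exact (hderiv t ht).differentiableAt.differentiableWithinAt
        · intro t ht
          rw [(hderiv t ht).deriv]
          rw [interior_Icc] at ht
          have ht0 : 0 < t := lt_trans hx₀ ht.1
          have hle : Real.log t ≤ t - 1 := Real.log_le_sub_one_of_pos ht0
          nlinarith [ht.2]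
      have := hanti (Set.left_mem_Icc.2 hx1) (Set.right_mem_Icc.2 hx1) hx1
      rw [hF1] at this
      exact this
    · -- F monotone on [1, x]
      have hpos : ∀ t ∈ Set.Icc 1 x, t ≠ 0 := fun t ht => by
        have : (0 : ℝ) < t := lt_of_lt_of_le one_pos ht.1
        exact this.ne'
      have hderiv : ∀ t ∈ interior (Set.Icc 1 x), HasDerivAt F
          (Real.log t - (2 / 3) * (t - 1)) t := by
        rw [interior_Icc]
        intro t ht
        exact F_hasDerivAt t (lt_trans one_pos ht.1)
      have hmono : MonotoneOn F (Set.Icc 1 x) := by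
        apply monotoneOn_of_deriv_nonneg (convex_Icc 1 x) (F_cont hpos)
        · intro t ht
          exact (hderiv t ht).differentiableAt.differentiableWithinAt
        · intro t ht
          rw [(hderiv t ht).deriv]
          rw [interior_Icc] at ht
          have := log_ge t ht.1.le (by linarith [ht.2])
          linarith
      have := hmono (Set.left_mem_Icc.2 hx1) (Set.right_mem_Icc.2 hx1) hx1
      rw [hF1] at this
      exact this
  have : (1 / 3) * (x - 1) ^ 2 ≤ x * (Real.log x - 1) + 1 := by
    have := key
    simp only [hF] at this
    linarith
  exact this
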